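/- Let n ∈ ℕ, let ξ ∈ Δ_n, let C ∈ 𝒞_n, and define P(λ) := ∫_{ℝ^n} log(Σ_{i=1}^n ξ_i e^{λ x_i}) dN(0,C)(x) for λ ∈ ℝ. Then P is differentiable on ℝ and P′(λ) = λ·(1 − ∫_{ℝ^n} Σ_{i,j=1}^n w_i(λ,x) w_j(λ,x) c_{ij} dN(0,C)(x)). -/

import Mathlib

open MeasureTheory ProbabilityTheory

namespace FreeEnergyAux

open Real Fin
open scoped ENNReal NNReal


lemma phi_eq (t : ℝ) : gaussianPDFReal 0 1 t = (√(2 * π))⁻¹ * rexp (-(t ^ 2) / 2) := by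
  simp [gaussianPDFReal]

lemma continuous_phi : Continuous (gaussianPDFReal 0 1) := by
  rw [gaussianPDFReal_def]
  fun_prop

lemma hasDerivAt_phi (t : ℝ) :
    HasDerivAt (gaussianPDFReal 0 1) (-t * gaussianPDFReal 0 1 t) t := by
  have h1 : HasDerivAt (fun t : ℝ => -(t ^ 2) / 2) (-t) t := by
    have := ((hasDerivAt_pow 2 t).neg).div_const 2
    exact this.congr_deriv (by norm_num; ring)
  have h2 := (h1.exp).const_mul ((√(2 * π))⁻¹)
  have he : (fun t : ℝ => (√(2 * π))⁻¹ * rexp (-(t ^ 2) / 2)) = gaussianPDFReal 0 1 := by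
    funext s; rw [phi_eq]
  rw [he] at h2
  refine h2.congr_deriv ?_
  rw [phi_eq]; ring

lemma integrable_abs_mul_phi (c : ℝ) :
    Integrable (fun t : ℝ => c * (|t| * gaussianPDFReal 0 1 t)) := by
  have h : Integrable (fun t : ℝ => t * rexp (-(1/2 : ℝ) * t ^ 2)) :=
    integrable_mul_exp_neg_mul_sq (by norm_num)
  have h2 := (h.abs.const_mul (c * (√(2 * π))⁻¹))
  apply h2.congr (ae_of_all _ fun t => ?_)
  simp only [phi_eq, abs_mul, abs_of_nonneg (exp_nonneg _),
    show -(1/2 : ℝ) * t ^ 2 = -(t ^ 2) / 2 by ring]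
  ring

lemma integrable_phi_mul (c : ℝ) :
    Integrable (fun t : ℝ => c * gaussianPDFReal 0 1 t) :=
  (integrable_gaussianPDFReal 0 1).const_mul c

lemma integral_gauss_eq (f : ℝ → ℝ) :
    ∫ t, f t ∂(gaussianReal 0 1) = ∫ t, gaussianPDFReal 0 1 t * f t := by
  rw [gaussianReal_of_var_ne_zero _ one_ne_zero,
    show volume.withDensity (gaussianPDF 0 1)
      = volume.withDensity (fun t => ((gaussianPDFReal 0 1 t).toNNReal : ℝ≥0∞)) from rfl,
    integral_withDensity_eq_integral_smul ((measurable_gaussianPDFReal 0 1).real_toNNReal)]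
  congr 1; funext t
  simp [NNReal.smul_def, Real.coe_toNNReal _ (gaussianPDFReal_nonneg 0 1 t)]

lemma integrable_gauss_iff (f : ℝ → ℝ) (hf : AEStronglyMeasurable f volume) :
    Integrable f (gaussianReal 0 1) ↔
      Integrable (fun t => f t * gaussianPDFReal 0 1 t) volume := by
  rw [gaussianReal_of_var_ne_zero _ one_ne_zero,
    show volume.withDensity (gaussianPDF 0 1)
      = volume.withDensity (fun t => ENNReal.ofReal (gaussianPDFReal 0 1 t)) from rfl,
    integrable_withDensity_iff ((measurable_gaussianPDFReal 0 1).ennreal_ofReal)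
      (ae_of_all _ fun t => ENNReal.ofReal_lt_top)]
  simp only [ENNReal.toReal_ofReal (gaussianPDFReal_nonneg 0 1 _)]

lemma integrable_abs_gauss : Integrable (fun t : ℝ => |t|) (gaussianReal 0 1) := by
  rw [integrable_gauss_iff _ continuous_abs.aestronglyMeasurable]
  simpa [mul_comm] using integrable_abs_mul_phi 1

lemma integrable_abs_gauss' (c : ℝ) :
    Integrable (fun t : ℝ => c * |t|) (gaussianReal 0 1) :=
  integrable_abs_gauss.const_mul c

/-- One-dimensional Gaussian integration by parts (Stein's identity). -/
lemma gauss_ibp (g g' : ℝ → ℝ) (hg : ∀ t, HasDerivAt g (g' t) t)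
    (hg'c : Continuous g') (M M' : ℝ) (hM : ∀ t, |g t| ≤ M) (hM' : ∀ t, |g' t| ≤ M') :
    ∫ t, t * g t ∂(gaussianReal 0 1) = ∫ t, g' t ∂(gaussianReal 0 1) := by
  have hgc : Continuous g := by
    rw [continuous_iff_continuousAt]; exact fun t => (hg t).continuousAt
  set φ := gaussianPDFReal 0 1 with hφdef
  have hφc : Continuous φ := continuous_phi
  have hφnn : ∀ t, 0 ≤ φ t := gaussianPDFReal_nonneg 0 1
  have hφint : Integrable φ volume := integrable_gaussianPDFReal 0 1
  have hF : ∀ t, HasDerivAt (fun t => g t * φ t)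
      (g' t * φ t + g t * (-t * φ t)) t := fun t => (hg t).mul (hasDerivAt_phi t)
  have int1 : Integrable (fun t => g' t * φ t) volume := by
    refine (hφint.const_mul M').mono' ((hg'c.mul hφc).aestronglyMeasurable)
      (ae_of_all _ fun t => ?_)
    rw [Real.norm_eq_abs, abs_mul, abs_of_nonneg (hφnn t)]
    exact mul_le_mul_of_nonneg_right (hM' t) (hφnn t)
  have int2 : Integrable (fun t => t * g t * φ t) volume := by
    refine (integrable_abs_mul_phi M).mono'
      (((continuous_id.mul hgc).mul hφc).aestronglyMeasurable) (ae_of_all _ fun t => ?_)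
    rw [Real.norm_eq_abs, abs_mul, abs_mul, abs_of_nonneg (hφnn t)]
    have : |t| * |g t| ≤ |t| * M := mul_le_mul_of_nonneg_left (hM t) (abs_nonneg t)
    calc |t| * |g t| * φ t ≤ |t| * M * φ t := mul_le_mul_of_nonneg_right this (hφnn t)
      _ = M * (|t| * φ t) := by ring
  have intF : Integrable (fun t => g t * φ t) volume := by
    refine (hφint.const_mul M).mono' ((hgc.mul hφc).aestronglyMeasurable)
      (ae_of_all _ fun t => ?_)
    rw [Real.norm_eq_abs, abs_mul, abs_of_nonneg (hφnn t)]
    exact mul_le_mul_of_nonneg_right (hM t) (hφnn t)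
  have intF' : Integrable (fun t => g' t * φ t + g t * (-t * φ t)) volume := by
    refine int1.add ?_
    refine int2.neg.congr (ae_of_all _ fun t => ?_)
    simp only [Pi.neg_apply]; ring
  have key : ∫ t, (g' t * φ t + g t * (-t * φ t)) = 0 :=
    integral_eq_zero_of_hasDerivAt_of_integrable hF intF' intF
  have split : ∫ t, (g' t * φ t + g t * (-t * φ t))
      = (∫ t, g' t * φ t) - ∫ t, t * g t * φ t := by
    rw [show (fun t => g' t * φ t + g t * (-t * φ t))
        = fun t => g' t * φ t - t * g t * φ t from funext fun t => by ring]
    exact integral_sub int1 int2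
  have : ∫ t, t * g t * φ t = ∫ t, g' t * φ t := by
    rw [split] at key; linarith
  rw [integral_gauss_eq, integral_gauss_eq]
  calc ∫ t, φ t * (t * g t) = ∫ t, t * g t * φ t := by congr 1; funext t; ring
    _ = ∫ t, g' t * φ t := this
    _ = ∫ t, φ t * g' t := by congr 1; funext t; ring

noncomputable def gpi (ν : ℕ) : Measure (Fin ν → ℝ) :=
  Measure.pi fun _ : Fin ν => gaussianReal 0 1

instance (ν : ℕ) : IsProbabilityMeasure (gpi ν) := by
  unfold gpi; infer_instance

lemma continuous_insertNth {m : ℕ} (k : Fin (m + 1)) (y : Fin m → ℝ) :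
    Continuous fun t : ℝ => (Fin.insertNth k t y : Fin (m + 1) → ℝ) := by
  refine continuous_pi fun r => ?_
  rcases eq_or_ne r k with rfl | hr
  · simpa using continuous_id'
  · obtain ⟨j, hj⟩ := Fin.exists_succAbove_eq hr
    have : ∀ t : ℝ, (Fin.insertNth k t y : Fin (m+1) → ℝ) r = y j := by
      intro t; rw [← hj, Fin.insertNth_apply_succAbove]
    simp only [this]
    exact continuous_const

/-- Transfer along the coordinate-splitting measure equivalence. -/
lemma integral_gpi_split {m : ℕ} (k : Fin (m + 1)) (f : (Fin (m + 1) → ℝ) → ℝ) :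
    ∫ z, f z ∂(gpi (m + 1))
      = ∫ p : ℝ × (Fin m → ℝ), f (Fin.insertNth k p.1 p.2)
          ∂((gaussianReal 0 1).prod (gpi m)) := by
  unfold gpi
  have MP := measurePreserving_piFinSuccAbove (fun _ : Fin (m + 1) => gaussianReal 0 1) k
  rw [← MP.integral_comp (MeasurableEquiv.piFinSuccAbove (fun _ => ℝ) k).measurableEmbedding
    (fun p => f (Fin.insertNth k p.1 p.2))]
  · congr 1; funext z
    simp [MeasurableEquiv.piFinSuccAbove, Fin.insertNthEquiv]

lemma integrable_gpi_split {m : ℕ} (k : Fin (m + 1)) (f : (Fin (m + 1) → ℝ) → ℝ) :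
    Integrable f (gpi (m + 1))
      ↔ Integrable (fun p : ℝ × (Fin m → ℝ) => f (Fin.insertNth k p.1 p.2))
          ((gaussianReal 0 1).prod (gpi m)) := by
  unfold gpi
  have MP := measurePreserving_piFinSuccAbove (fun _ : Fin (m + 1) => gaussianReal 0 1) k
  rw [← MP.integrable_comp_emb
    (MeasurableEquiv.piFinSuccAbove (fun _ => ℝ) k).measurableEmbedding]
  constructor <;> intro h <;> refine h.congr (ae_of_all _ fun z => ?_) <;>
    simp [Function.comp, MeasurableEquiv.piFinSuccAbove, Fin.insertNthEquiv]

lemma integrable_comp_eval_gpi {m : ℕ} (k : Fin (m + 1)) (f : ℝ → ℝ)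
    (hf : Integrable f (gaussianReal 0 1)) :
    Integrable (fun z : Fin (m+1) → ℝ => f (z k)) (gpi (m + 1)) := by
  rw [integrable_gpi_split k]
  simp only [Fin.insertNth_apply_same]
  simpa using hf.mul_prod (integrable_const (1:ℝ))

lemma gauss_ibp_pi {m : ℕ} (k : Fin (m + 1)) (G G' : (Fin (m + 1) → ℝ) → ℝ)
    (hGc : Continuous G) (hG'c : Continuous G')
    (hd : ∀ (y : Fin m → ℝ) (t : ℝ),
      HasDerivAt (fun s => G (Fin.insertNth k s y)) (G' (Fin.insertNth k t y)) t)
    (M M' : ℝ) (hM : ∀ z, |G z| ≤ M) (hM' : ∀ z, |G' z| ≤ M') :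
    ∫ z, z k * G z ∂(gpi (m + 1)) = ∫ z, G' z ∂(gpi (m + 1)) := by
  have int1 : Integrable (fun z : Fin (m+1) → ℝ => z k * G z) (gpi (m+1)) := by
    refine (integrable_comp_eval_gpi k (fun t => M * |t|)
      (integrable_abs_gauss.const_mul M)).mono'
      (((continuous_apply k).mul hGc).aestronglyMeasurable) (ae_of_all _ fun z => ?_)
    rw [Real.norm_eq_abs, abs_mul]
    calc |z k| * |G z| ≤ |z k| * M := mul_le_mul_of_nonneg_left (hM z) (abs_nonneg _)
      _ = M * |z k| := mul_comm _ _
  have int2 : Integrable G' (gpi (m+1)) :=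
    (integrable_const M').mono' hG'c.aestronglyMeasurable (ae_of_all _ fun z => by
      rw [Real.norm_eq_abs]; exact hM' z)
  rw [integral_gpi_split k, integral_gpi_split k (f := G')]
  rw [integral_prod_symm _ ((integrable_gpi_split k _).mp int1),
      integral_prod_symm _ ((integrable_gpi_split k _).mp int2)]
  refine integral_congr_ae (ae_of_all _ fun y => ?_)
  simp only [Fin.insertNth_apply_same]
  exact gauss_ibp _ _ (hd y) (hG'c.comp (continuous_insertNth k y)) M M'
    (fun t => hM _) (fun t => hM' _)

end FreeEnergyAux

open scoped Classical in
/-- Centered Gaussian measure on `ℝⁿ` with covariance matrix `C`: the image of the standard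
Gaussian product measure under multiplication by the positive semidefinite square root of `C`
(junk value `0` if `C` is not positive semidefinite). -/
noncomputable def gaussianPi {n : ℕ} (C : Matrix (Fin n) (Fin n) ℝ) : Measure (Fin n → ℝ) :=
  if hC : C.PosSemidef then
    (Measure.pi fun _ : Fin n => gaussianReal 0 1).map (fun z => (hC.1.eigenvectorUnitary.1 * Matrix.diagonal (Real.sqrt ∘ hC.1.eigenvalues) *
      (star hC.1.eigenvectorUnitary : Matrix (Fin n) (Fin n) ℝ)).mulVec z)
  else 0

/-- The tilted Gibbs weights `w_i(λ,x) = ξ_i e^{λ x_i} / ∑_j ξ_j e^{λ x_j}`. -/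
noncomputable def gibbsW {n : ℕ} (ξ : Fin n → ℝ) (lam : ℝ) (x : Fin n → ℝ) (i : Fin n) : ℝ :=
  ξ i * Real.exp (lam * x i) / ∑ j, ξ j * Real.exp (lam * x j)

open Real FreeEnergyAux

set_option maxHeartbeats 1000000 in
/-- **Derivative of the free-energy functional** (from the proof of Lemma 2.7).
For `ξ ∈ Δ_n` and `C ∈ 𝒞_n`, the function
`P(λ) = ∫ log(∑_i ξ_i e^{λ x_i}) dN(0,C)(x)` is differentiable with
`P'(λ) = λ (1 − ∫ ∑_{i,j} w_i(λ,x) w_j(λ,x) c_{ij} dN(0,C)(x))`. -/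
theorem freeEnergy_hasDerivAt
    {n : ℕ} (ξ : Fin n → ℝ) (hξnonneg : ∀ i, 0 ≤ ξ i) (hξsum : ∑ i, ξ i = 1)
    (C : Matrix (Fin n) (Fin n) ℝ) (hC : C.PosSemidef) (hCdiag : ∀ i, C i i = 1)
    (lam : ℝ) :
    HasDerivAt
      (fun l : ℝ => ∫ x, Real.log (∑ i, ξ i * Real.exp (l * x i)) ∂(gaussianPi C))
      (lam * (1 - ∫ x, ∑ i, ∑ j, gibbsW ξ lam x i * gibbsW ξ lam x j * C i j
        ∂(gaussianPi C)))
      lam := by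
  cases n with
  | zero => exact absurd hξsum (by simp)
  | succ m =>
  classical
  obtain ⟨i0, hi0⟩ : ∃ i, 0 < ξ i := by
    by_contra h
    push_neg at h
    have hz : ∀ i, ξ i = 0 := fun i => le_antisymm (h i) (hξnonneg i)
    simp [hz] at hξsum
  set A := (hC.1.eigenvectorUnitary.1 * Matrix.diagonal (Real.sqrt ∘ hC.1.eigenvalues) *
      (star hC.1.eigenvectorUnitary : Matrix (Fin (m+1)) (Fin (m+1)) ℝ)) with hA
  have h9 : A.conjTranspose = A := by
    rw [hA]; simp [Matrix.mul_assoc, Matrix.star_eq_conjTranspose]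
  have hAsym : ∀ i j, A i j = A j i := fun i j => by
    conv_lhs => rw [← h9]
    simp [Matrix.conjTranspose_apply]
  have hAA : ∀ i j, (∑ k, A i k * A j k) = C i j := by
    intro i j
    have h : A * A = C := by
      have hU : (star hC.1.eigenvectorUnitary : Matrix (Fin (m+1)) (Fin (m+1)) ℝ)
          * hC.1.eigenvectorUnitary.1 = 1 := hC.1.eigenvectorUnitary.2.1
      calc A * A = hC.1.eigenvectorUnitary.1 * (Matrix.diagonal (Real.sqrt ∘ hC.1.eigenvalues) *
            (((star hC.1.eigenvectorUnitary : Matrix (Fin (m+1)) (Fin (m+1)) ℝ)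
              * hC.1.eigenvectorUnitary.1) *
            (Matrix.diagonal (Real.sqrt ∘ hC.1.eigenvalues) *
            (star hC.1.eigenvectorUnitary : Matrix (Fin (m+1)) (Fin (m+1)) ℝ)))) := by
              simp only [hA, Matrix.mul_assoc]
        _ = C := by
          rw [hU, Matrix.one_mul, ← Matrix.mul_assoc (Matrix.diagonal _),
            Matrix.diagonal_mul_diagonal]
          conv_rhs => rw [hC.1.spectral_theorem, Unitary.conjStarAlgAut_apply]
          rw [Matrix.mul_assoc]
          congr 3
          funext i
          simp [Real.mul_self_sqrt (hC.eigenvalues_nonneg i)]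
    calc (∑ k, A i k * A j k) = ∑ k, A i k * A k j :=
          Finset.sum_congr rfl fun k _ => by rw [hAsym j k]
      _ = (A * A) i j := (Matrix.mul_apply).symm
      _ = C i j := by rw [h]
  set T : (Fin (m+1) → ℝ) → (Fin (m+1) → ℝ) := fun z => A.mulVec z with hT
  have hTapp : ∀ z i, T z i = ∑ k, A i k * z k := fun z i => by
    simp [hT, Matrix.mulVec, dotProduct]
  have hTcont : Continuous T := continuous_pi fun i => by
    simp only [funext fun z => hTapp z i]
    exact continuous_finset_sum _ fun k _ => continuous_const.mul (continuous_apply k)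
  have hμ : gaussianPi C = (gpi (m+1)).map T := by
    unfold gaussianPi gpi
    rw [dif_pos hC]
  -- partition function
  set Z : ℝ → (Fin (m+1) → ℝ) → ℝ := fun l x => ∑ i, ξ i * rexp (l * x i) with hZ
  have hZpos : ∀ l x, 0 < Z l x := by
    intro l x
    have h1 : ξ i0 * rexp (l * x i0) ≤ Z l x :=
      Finset.single_le_sum (f := fun i => ξ i * rexp (l * x i))
        (fun i _ => mul_nonneg (hξnonneg i) (exp_nonneg _)) (Finset.mem_univ i0)
    exact lt_of_lt_of_le (mul_pos hi0 (exp_pos _)) h1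
  have hZcont : ∀ l, Continuous fun x : Fin (m+1) → ℝ => Z l x := fun l =>
    continuous_finset_sum _ fun i _ =>
      continuous_const.mul ((continuous_const.mul (continuous_apply i)).rexp)
  -- Gibbs weights
  have hw_eq : ∀ l x i, gibbsW ξ l x i = ξ i * rexp (l * x i) / Z l x := fun _ _ _ => rfl
  have hwnn : ∀ l x i, 0 ≤ gibbsW ξ l x i := fun l x i =>
    div_nonneg (mul_nonneg (hξnonneg i) (exp_nonneg _)) (hZpos l x).le
  have hwle : ∀ l x i, gibbsW ξ l x i ≤ 1 := by
    intro l x i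
    rw [hw_eq, div_le_one (hZpos l x)]
    exact Finset.single_le_sum (f := fun i => ξ i * rexp (l * x i))
      (fun i _ => mul_nonneg (hξnonneg i) (exp_nonneg _)) (Finset.mem_univ i)
  have hwabs : ∀ l x i, |gibbsW ξ l x i| ≤ 1 := fun l x i => by
    rw [abs_of_nonneg (hwnn l x i)]; exact hwle l x i
  have hwsum : ∀ l x, (∑ i, gibbsW ξ l x i) = 1 := by
    intro l x
    have : (∑ i, gibbsW ξ l x i) = (∑ i, ξ i * rexp (l * x i)) / Z l x := by
      rw [Finset.sum_div]
      exact Finset.sum_congr rfl fun i _ => hw_eq l x i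
    rw [this]
    exact div_self (hZpos l x).ne'
  have hwcont : ∀ i, Continuous fun x : Fin (m+1) → ℝ => gibbsW ξ lam x i := fun i => by
    simp only [funext fun x => hw_eq lam x i]
    exact (continuous_const.mul ((continuous_const.mul
      (continuous_apply i)).rexp)).div (hZcont lam) fun x => (hZpos lam x).ne'
  -- integrable linear bounds
  have hTint : ∀ i, Integrable (fun z => |T z i|) (gpi (m+1)) := by
    intro i
    have hb : ∀ z : Fin (m+1) → ℝ, |T z i| ≤ ∑ k, |A i k| * |z k| := by
      intro z
      rw [hTapp]
      refine (Finset.abs_sum_le_sum_abs _ _).trans (le_of_eq ?_)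
      exact Finset.sum_congr rfl fun k _ => abs_mul _ _
    have hint : Integrable (fun z : Fin (m+1) → ℝ => ∑ k, |A i k| * |z k|) (gpi (m+1)) :=
      integrable_finset_sum _ fun k _ =>
        integrable_comp_eval_gpi k (fun t => |A i k| * |t|) (integrable_abs_gauss.const_mul _)
    refine hint.mono' ?_ (ae_of_all _ fun z => ?_)
    · exact ((continuous_apply i).comp hTcont).abs.aestronglyMeasurable
    · rw [Real.norm_eq_abs, abs_abs]; exact hb z
  have hSAint : Integrable (fun z => ∑ i, |T z i|) (gpi (m+1)) :=
    integrable_finset_sum _ fun i _ => hTint i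
  have hSAnn : ∀ z : Fin (m+1) → ℝ, 0 ≤ ∑ i, |T z i| := fun z =>
    Finset.sum_nonneg fun i _ => abs_nonneg _
  have habsle : ∀ (x : Fin (m+1) → ℝ) i, |x i| ≤ ∑ j, |x j| := fun x i =>
    Finset.single_le_sum (fun j _ => abs_nonneg (x j)) (Finset.mem_univ i)
  -- rewrite P through the map
  have hPfun : (fun l : ℝ => ∫ x, Real.log (∑ i, ξ i * Real.exp (l * x i)) ∂(gaussianPi C))
      = fun l => ∫ z, Real.log (Z l (T z)) ∂(gpi (m+1)) := by
    funext l
    have hmeas : AEStronglyMeasurable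
        (fun x : Fin (m+1) → ℝ => Real.log (∑ i, ξ i * Real.exp (l * x i)))
        ((gpi (m+1)).map T) := by
      apply Measurable.aestronglyMeasurable
      apply Measurable.log
      fun_prop
    rw [hμ, integral_map hTcont.measurable.aemeasurable hmeas]
  -- pointwise bound for log Z
  have hlogbd : ∀ (l : ℝ) (x : Fin (m+1) → ℝ),
      |Real.log (Z l x)| ≤ |Real.log (ξ i0)| + |l| * ∑ i, |x i| := by
    intro l x
    set S := ∑ i, |x i| with hS
    have hSnn : 0 ≤ S := Finset.sum_nonneg fun i _ => abs_nonneg _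
    have hup : Real.log (Z l x) ≤ |l| * S := by
      have hZle : Z l x ≤ rexp (|l| * S) := by
        calc Z l x ≤ ∑ i, ξ i * rexp (|l| * S) := by
              refine Finset.sum_le_sum fun i _ => ?_
              refine mul_le_mul_of_nonneg_left (Real.exp_le_exp.2 ?_) (hξnonneg i)
              calc l * x i ≤ |l * x i| := le_abs_self _
                _ = |l| * |x i| := abs_mul _ _
                _ ≤ |l| * S := mul_le_mul_of_nonneg_left (habsle x i) (abs_nonneg l)
          _ = rexp (|l| * S) := by rw [← Finset.sum_mul, hξsum, one_mul]
      calc Real.log (Z l x) ≤ Real.log (rexp (|l| * S)) :=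
            Real.log_le_log (hZpos l x) hZle
        _ = |l| * S := Real.log_exp _
    have hlow : Real.log (ξ i0) - |l| * S ≤ Real.log (Z l x) := by
      have h1 : ξ i0 * rexp (l * x i0) ≤ Z l x :=
        Finset.single_le_sum (f := fun i => ξ i * rexp (l * x i))
          (fun i _ => mul_nonneg (hξnonneg i) (exp_nonneg _)) (Finset.mem_univ i0)
      have h2 : Real.log (ξ i0 * rexp (l * x i0)) ≤ Real.log (Z l x) :=
        Real.log_le_log (mul_pos hi0 (exp_pos _)) h1
      rw [Real.log_mul hi0.ne' (exp_pos _).ne', Real.log_exp] at h2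
      have h3 : -( |l| * S ) ≤ l * x i0 := by
        have : |l * x i0| ≤ |l| * S := by
          rw [abs_mul]
          exact mul_le_mul_of_nonneg_left (habsle x i0) (abs_nonneg l)
        linarith [neg_abs_le (l * x i0)]
      linarith
    have h4 : -|Real.log (ξ i0)| ≤ Real.log (ξ i0) := neg_abs_le _
    rw [abs_le]
    constructor <;> nlinarith [abs_nonneg (Real.log (ξ i0)), abs_nonneg l]
  -- the l-derivative of log Z and its bound
  have hDbd : ∀ (l : ℝ) (x : Fin (m+1) → ℝ),
      |(∑ i, ξ i * (rexp (l * x i) * x i)) / Z l x| ≤ ∑ i, |x i| := by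
    intro l x
    rw [abs_div, abs_of_pos (hZpos l x), div_le_iff₀ (hZpos l x)]
    calc |∑ i, ξ i * (rexp (l * x i) * x i)| ≤ ∑ i, |ξ i * (rexp (l * x i) * x i)| :=
          Finset.abs_sum_le_sum_abs _ _
      _ ≤ ∑ i, (∑ j, |x j|) * (ξ i * rexp (l * x i)) := by
          refine Finset.sum_le_sum fun i _ => ?_
          rw [abs_mul, abs_mul, abs_of_nonneg (hξnonneg i), abs_of_nonneg (exp_nonneg _)]
          calc ξ i * (rexp (l * x i) * |x i|)
              ≤ ξ i * (rexp (l * x i) * ∑ j, |x j|) := by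
                refine mul_le_mul_of_nonneg_left ?_ (hξnonneg i)
                exact mul_le_mul_of_nonneg_left (habsle x i) (exp_nonneg _)
            _ = (∑ j, |x j|) * (ξ i * rexp (l * x i)) := by ring
      _ = (∑ i, |x i|) * Z l x := by rw [← Finset.mul_sum]
  have hderivZ : ∀ (l : ℝ) (x : Fin (m+1) → ℝ),
      HasDerivAt (fun l => Real.log (Z l x))
        ((∑ i, ξ i * (rexp (l * x i) * x i)) / Z l x) l := by
    intro l x
    have hZl : HasDerivAt (fun l => Z l x) (∑ i, ξ i * (rexp (l * x i) * x i)) l := by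
      refine HasDerivAt.fun_sum fun i _ => ?_
      exact ((hasDerivAt_mul_const (x i)).exp).const_mul (ξ i)
    exact hZl.log (hZpos l x).ne'
  -- differentiation under the integral sign
  have hpar := hasDerivAt_integral_of_dominated_loc_of_deriv_le
    (F := fun (l : ℝ) (z : Fin (m+1) → ℝ) => Real.log (Z l (T z)))
    (F' := fun (l : ℝ) (z : Fin (m+1) → ℝ) =>
      (∑ i, ξ i * (rexp (l * T z i) * T z i)) / Z l (T z))
    (x₀ := lam) (bound := fun z => ∑ i, |T z i|) (μ := gpi (m+1)) (Metric.ball_mem_nhds lam one_pos)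
    (Filter.Eventually.of_forall fun l =>
      (Real.measurable_log.comp ((hZcont l).comp hTcont).measurable).aestronglyMeasurable)
    (by
      refine ((integrable_const (|Real.log (ξ i0)|)).add
        (hSAint.const_mul (|lam|))).mono'
        ((Real.measurable_log.comp ((hZcont lam).comp hTcont).measurable).aestronglyMeasurable)
        (ae_of_all _ fun z => ?_)
      rw [Real.norm_eq_abs]
      exact hlogbd lam (T z))
    (by
      refine Measurable.aestronglyMeasurable ?_
      refine Measurable.div ?_ ((hZcont lam).comp hTcont).measurable
      exact Finset.measurable_sum _ fun i _ => by fun_prop)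
    (ae_of_all _ fun z l _ => by
      rw [Real.norm_eq_abs]
      exact hDbd l (T z))
    hSAint
    (ae_of_all _ fun z l _ => hderivZ l (T z))
  obtain ⟨-, hP⟩ := hpar
  -- abbreviations for the weights pulled back and the IBP data
  set W : (Fin (m+1) → ℝ) → Fin (m+1) → ℝ := fun z i => gibbsW ξ lam (T z) i with hW
  set H : Fin (m+1) → (Fin (m+1) → ℝ) → ℝ := fun k z => ∑ i, A i k * W z i with hH
  set Q : Fin (m+1) → (Fin (m+1) → ℝ) → ℝ := fun k z =>
    lam * ((∑ i, A i k * A i k * W z i)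
      - (∑ i, A i k * W z i) * (∑ j, A j k * W z j)) with hQ
  have hWcont : ∀ i, Continuous fun z => W z i := fun i => (hwcont i).comp hTcont
  have hWabs : ∀ z i, |W z i| ≤ 1 := fun z i => hwabs lam (T z) i
  have hHcont : ∀ k, Continuous (H k) := fun k =>
    continuous_finset_sum _ fun i _ => continuous_const.mul (hWcont i)
  have hQcont : ∀ k, Continuous (Q k) := fun k =>
    continuous_const.mul
      ((continuous_finset_sum _ fun i _ => continuous_const.mul (hWcont i)).sub
        ((continuous_finset_sum _ fun i _ => continuous_const.mul (hWcont i)).mul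
          (continuous_finset_sum _ fun j _ => continuous_const.mul (hWcont j))))
  have hsumabs : ∀ (k : Fin (m+1)) (c : Fin (m+1) → ℝ) z,
      |∑ i, c i * W z i| ≤ ∑ i, |c i| := by
    intro k c z
    refine (Finset.abs_sum_le_sum_abs _ _).trans (Finset.sum_le_sum fun i _ => ?_)
    rw [abs_mul]
    calc |c i| * |W z i| ≤ |c i| * 1 :=
          mul_le_mul_of_nonneg_left (hWabs z i) (abs_nonneg _)
      _ = |c i| := mul_one _
  have hHbd : ∀ k z, |H k z| ≤ ∑ i, |A i k| := fun k z =>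
    hsumabs k (fun i => A i k) z
  have hQbd : ∀ k z, |Q k z|
      ≤ |lam| * ((∑ i, |A i k * A i k|) + (∑ i, |A i k|) * (∑ i, |A i k|)) := by
    intro k z
    simp only [hQ]
    rw [abs_mul]
    refine mul_le_mul_of_nonneg_left ?_ (abs_nonneg lam)
    calc |(∑ i, A i k * A i k * W z i)
          - (∑ i, A i k * W z i) * (∑ j, A j k * W z j)|
        ≤ |∑ i, A i k * A i k * W z i|
          + |(∑ i, A i k * W z i) * (∑ j, A j k * W z j)| := abs_sub _ _
      _ ≤ (∑ i, |A i k * A i k|) + (∑ i, |A i k|) * (∑ i, |A i k|) := by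
          refine add_le_add ?_ ?_
          · have := hsumabs k (fun i => A i k * A i k) z
            simpa [mul_assoc] using this
          · rw [abs_mul]
            exact mul_le_mul (hsumabs k (fun i => A i k) z)
              (hsumabs k (fun j => A j k) z) (abs_nonneg _)
              (Finset.sum_nonneg fun i _ => abs_nonneg _)
  -- derivative along coordinate k
  have hd : ∀ (k : Fin (m+1)) (y : Fin m → ℝ) (t : ℝ),
      HasDerivAt (fun s => H k (Fin.insertNth k s y)) (Q k (Fin.insertNth k t y)) t := by
    intro k y t
    have hxfun : ∀ i, (fun s : ℝ => T (Fin.insertNth k s y) i)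
        = fun s => A i k * s + ∑ j, A i (k.succAbove j) * y j := by
      intro i; funext s
      calc T (Fin.insertNth k s y) i
          = ∑ r, A i r * (Fin.insertNth k s y : Fin (m+1) → ℝ) r := hTapp _ i
        _ = A i k * (Fin.insertNth k s y : Fin (m+1) → ℝ) k
            + ∑ j, A i (k.succAbove j)
                * (Fin.insertNth k s y : Fin (m+1) → ℝ) (k.succAbove j) :=
          Fin.sum_univ_succAbove _ k
        _ = A i k * s + ∑ j, A i (k.succAbove j) * y j := by simp
    have hx : ∀ i, HasDerivAt (fun s => T (Fin.insertNth k s y) i) (A i k) t := by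
      intro i
      rw [hxfun i]
      simpa using ((hasDerivAt_id t).const_mul (A i k)).add_const
        (∑ j, A i (k.succAbove j) * y j)
    have hN : ∀ i, HasDerivAt (fun s => ξ i * rexp (lam * T (Fin.insertNth k s y) i))
        (ξ i * (rexp (lam * T (Fin.insertNth k t y) i) * (lam * A i k))) t := fun i =>
      (((hx i).const_mul lam).exp).const_mul (ξ i)
    have hZZ : HasDerivAt (fun s => Z lam (T (Fin.insertNth k s y)))
        (∑ j, ξ j * (rexp (lam * T (Fin.insertNth k t y) j) * (lam * A j k))) t :=
      HasDerivAt.fun_sum fun j _ => hN j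
    have hw' : ∀ i, HasDerivAt (fun s => W (Fin.insertNth k s y) i)
        (lam * A i k * W (Fin.insertNth k t y) i
          - W (Fin.insertNth k t y) i
            * (lam * ∑ j, A j k * W (Fin.insertNth k t y) j)) t := by
      intro i
      have hdiv := (hN i).div hZZ (hZpos lam (T (Fin.insertNth k t y))).ne'
      have hval : (ξ i * (rexp (lam * T (Fin.insertNth k t y) i) * (lam * A i k))
            * Z lam (T (Fin.insertNth k t y))
          - ξ i * rexp (lam * T (Fin.insertNth k t y) i)
            * ∑ j, ξ j * (rexp (lam * T (Fin.insertNth k t y) j) * (lam * A j k)))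
          / Z lam (T (Fin.insertNth k t y)) ^ 2
          = lam * A i k * W (Fin.insertNth k t y) i
            - W (Fin.insertNth k t y) i
              * (lam * ∑ j, A j k * W (Fin.insertNth k t y) j) := by
        have hWt : ∀ j, W (Fin.insertNth k t y) j
            = ξ j * rexp (lam * T (Fin.insertNth k t y) j)
              / Z lam (T (Fin.insertNth k t y)) := fun j => rfl
        simp only [hWt]
        rw [show (∑ j, ξ j * (rexp (lam * T (Fin.insertNth k t y) j) * (lam * A j k)))
            = lam * ∑ j, A j k * (ξ j * rexp (lam * T (Fin.insertNth k t y) j)) from by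
          rw [Finset.mul_sum]; exact Finset.sum_congr rfl fun j _ => by ring]
        rw [show (∑ j, A j k * (ξ j * rexp (lam * T (Fin.insertNth k t y) j)
              / Z lam (T (Fin.insertNth k t y))))
            = (∑ j, A j k * (ξ j * rexp (lam * T (Fin.insertNth k t y) j)))
              / Z lam (T (Fin.insertNth k t y)) from by
          rw [Finset.sum_div]; exact Finset.sum_congr rfl fun j _ => by ring]
        field_simp [(hZpos lam (T (Fin.insertNth k t y))).ne']
      exact hval ▸ hdiv
    have hH' : HasDerivAt (fun s => H k (Fin.insertNth k s y))
        (∑ i, A i k * (lam * A i k * W (Fin.insertNth k t y) i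
          - W (Fin.insertNth k t y) i
            * (lam * ∑ j, A j k * W (Fin.insertNth k t y) j))) t :=
      HasDerivAt.fun_sum fun i _ => (hw' i).const_mul (A i k)
    have hfin : (∑ i, A i k * (lam * A i k * W (Fin.insertNth k t y) i
          - W (Fin.insertNth k t y) i
            * (lam * ∑ j, A j k * W (Fin.insertNth k t y) j)))
        = Q k (Fin.insertNth k t y) := by
      simp only [hQ]
      rw [show (∑ i, A i k * (lam * A i k * W (Fin.insertNth k t y) i
            - W (Fin.insertNth k t y) i
              * (lam * ∑ j, A j k * W (Fin.insertNth k t y) j)))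
          = ∑ i, (lam * (A i k * A i k * W (Fin.insertNth k t y) i)
            - (A i k * W (Fin.insertNth k t y) i)
              * (lam * ∑ j, A j k * W (Fin.insertNth k t y) j)) from
        Finset.sum_congr rfl fun i _ => by ring]
      rw [Finset.sum_sub_distrib, ← Finset.mul_sum, ← Finset.sum_mul]
      ring
    exact hfin ▸ hH'
  -- integrability of the pieces
  have intk : ∀ k : Fin (m+1),
      Integrable (fun z => z k * H k z) (gpi (m+1)) := by
    intro k
    refine (integrable_comp_eval_gpi k (fun t => (∑ i, |A i k|) * |t|)
      (integrable_abs_gauss.const_mul _)).mono'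
      (((continuous_apply k).mul (hHcont k)).aestronglyMeasurable)
      (ae_of_all _ fun z => ?_)
    rw [Real.norm_eq_abs, abs_mul]
    calc |z k| * |H k z| ≤ |z k| * ∑ i, |A i k| :=
          mul_le_mul_of_nonneg_left (hHbd k z) (abs_nonneg _)
      _ = (∑ i, |A i k|) * |z k| := mul_comm _ _
  have intQ : ∀ k : Fin (m+1), Integrable (Q k) (gpi (m+1)) := fun k =>
    (integrable_const (|lam| * ((∑ i, |A i k * A i k|)
        + (∑ i, |A i k|) * (∑ i, |A i k|)))).mono'
      (hQcont k).aestronglyMeasurable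
      (ae_of_all _ fun z => by rw [Real.norm_eq_abs]; exact hQbd k z)
  -- the sum of all coordinate derivatives
  have hQsum : ∀ z, (∑ k, Q k z)
      = lam * (1 - ∑ i, ∑ j, gibbsW ξ lam (T z) i * gibbsW ξ lam (T z) j * C i j) := by
    intro z
    simp only [hQ]
    rw [← Finset.mul_sum]
    congr 1
    rw [Finset.sum_sub_distrib]
    have hA1 : (∑ k, ∑ i, A i k * A i k * W z i) = 1 := by
      rw [Finset.sum_comm]
      calc (∑ i, ∑ k, A i k * A i k * W z i) = ∑ i, W z i := by
            refine Finset.sum_congr rfl fun i _ => ?_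
            rw [← Finset.sum_mul, hAA i i, hCdiag i, one_mul]
        _ = 1 := hwsum lam (T z)
    have hA2 : (∑ k, (∑ i, A i k * W z i) * (∑ j, A j k * W z j))
        = ∑ i, ∑ j, gibbsW ξ lam (T z) i * gibbsW ξ lam (T z) j * C i j := by
      calc (∑ k, (∑ i, A i k * W z i) * (∑ j, A j k * W z j))
          = ∑ k, ∑ i, ∑ j, (A i k * W z i) * (A j k * W z j) := by
            refine Finset.sum_congr rfl fun k _ => ?_
            rw [Finset.sum_mul_sum]
        _ = ∑ i, ∑ k, ∑ j, (A i k * W z i) * (A j k * W z j) := Finset.sum_comm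
        _ = ∑ i, ∑ j, ∑ k, (A i k * W z i) * (A j k * W z j) := by
            exact Finset.sum_congr rfl fun i _ => Finset.sum_comm
        _ = ∑ i, ∑ j, W z i * W z j * C i j := by
            refine Finset.sum_congr rfl fun i _ => Finset.sum_congr rfl fun j _ => ?_
            calc (∑ k, (A i k * W z i) * (A j k * W z j))
                = ∑ k, (W z i * W z j) * (A i k * A j k) :=
                  Finset.sum_congr rfl fun k _ => by ring
              _ = (W z i * W z j) * ∑ k, A i k * A j k := by rw [Finset.mul_sum]
              _ = W z i * W z j * C i j := by rw [hAA]
        _ = ∑ i, ∑ j, gibbsW ξ lam (T z) i * gibbsW ξ lam (T z) j * C i j := rfl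
    rw [hA1, hA2]
  -- bound and integrability for the covariance sum
  have hSSbd : ∀ x : Fin (m+1) → ℝ,
      |∑ i, ∑ j, gibbsW ξ lam x i * gibbsW ξ lam x j * C i j| ≤ ∑ i, ∑ j, |C i j| := by
    intro x
    refine (Finset.abs_sum_le_sum_abs _ _).trans (Finset.sum_le_sum fun i _ => ?_)
    refine (Finset.abs_sum_le_sum_abs _ _).trans (Finset.sum_le_sum fun j _ => ?_)
    rw [abs_mul, abs_mul]
    calc |gibbsW ξ lam x i| * |gibbsW ξ lam x j| * |C i j|
        ≤ 1 * 1 * |C i j| := by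
          refine mul_le_mul_of_nonneg_right ?_ (abs_nonneg _)
          exact mul_le_mul (hwabs lam x i) (hwabs lam x j) (abs_nonneg _) zero_le_one
      _ = |C i j| := by ring
  have hSScont : Continuous fun x : Fin (m+1) → ℝ =>
      ∑ i, ∑ j, gibbsW ξ lam x i * gibbsW ξ lam x j * C i j :=
    continuous_finset_sum _ fun i _ => continuous_finset_sum _ fun j _ =>
      ((hwcont i).mul (hwcont j)).mul continuous_const
  have hSSTint : Integrable
      (fun z => ∑ i, ∑ j, gibbsW ξ lam (T z) i * gibbsW ξ lam (T z) j * C i j)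
      (gpi (m+1)) :=
    (integrable_const (∑ i, ∑ j, |C i j|)).mono'
      (hSScont.comp hTcont).aestronglyMeasurable
      (ae_of_all _ fun z => by rw [Real.norm_eq_abs]; exact hSSbd (T z))
  have hRHS : (∫ x, ∑ i, ∑ j, gibbsW ξ lam x i * gibbsW ξ lam x j * C i j ∂gaussianPi C)
      = ∫ z, ∑ i, ∑ j, gibbsW ξ lam (T z) i * gibbsW ξ lam (T z) j * C i j ∂gpi (m+1) := by
    rw [hμ, integral_map hTcont.measurable.aemeasurable hSScont.aestronglyMeasurable]
  -- identify the derivative value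
  have hVal : (∫ z, (∑ i, ξ i * (rexp (lam * T z i) * T z i)) / Z lam (T z) ∂gpi (m+1))
      = lam * (1 - ∫ x, ∑ i, ∑ j, gibbsW ξ lam x i * gibbsW ξ lam x j * C i j
          ∂gaussianPi C) := by
    have hpt1 : ∀ z : Fin (m+1) → ℝ,
        (∑ i, ξ i * (rexp (lam * T z i) * T z i)) / Z lam (T z)
          = ∑ k, z k * H k z := by
      intro z
      have e1 : (∑ i, ξ i * (rexp (lam * T z i) * T z i)) / Z lam (T z)
          = ∑ i, W z i * T z i := by
        rw [Finset.sum_div]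
        refine Finset.sum_congr rfl fun i _ => ?_
        rw [show W z i = ξ i * rexp (lam * T z i) / Z lam (T z) from rfl]
        field_simp
      have e2 : (∑ i, W z i * T z i) = ∑ k, z k * H k z := by
        simp only [hH]
        calc (∑ i, W z i * T z i) = ∑ i, ∑ k, W z i * (A i k * z k) := by
              refine Finset.sum_congr rfl fun i _ => ?_
              rw [hTapp, Finset.mul_sum]
          _ = ∑ k, ∑ i, W z i * (A i k * z k) := Finset.sum_comm
          _ = ∑ k, z k * ∑ i, A i k * W z i := by
              refine Finset.sum_congr rfl fun k _ => ?_
              rw [Finset.mul_sum]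
              exact Finset.sum_congr rfl fun i _ => by ring
      rw [e1, e2]
    calc (∫ z, (∑ i, ξ i * (rexp (lam * T z i) * T z i)) / Z lam (T z) ∂gpi (m+1))
        = ∫ z, ∑ k, z k * H k z ∂gpi (m+1) := integral_congr_ae (ae_of_all _ hpt1)
      _ = ∑ k, ∫ z, z k * H k z ∂gpi (m+1) := integral_finset_sum _ fun k _ => intk k
      _ = ∑ k, ∫ z, Q k z ∂gpi (m+1) := by
          refine Finset.sum_congr rfl fun k _ => ?_
          exact gauss_ibp_pi k (H k) (Q k) (hHcont k) (hQcont k) (hd k) _ _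
            (hHbd k) (hQbd k)
      _ = ∫ z, ∑ k, Q k z ∂gpi (m+1) := (integral_finset_sum _ fun k _ => intQ k).symm
      _ = ∫ z, lam * (1 - ∑ i, ∑ j,
            gibbsW ξ lam (T z) i * gibbsW ξ lam (T z) j * C i j) ∂gpi (m+1) :=
          integral_congr_ae (ae_of_all _ hQsum)
      _ = lam * (1 - ∫ x, ∑ i, ∑ j, gibbsW ξ lam x i * gibbsW ξ lam x j * C i j
            ∂gaussianPi C) := by
          rw [integral_const_mul, hRHS]
          congr 1
          rw [integral_sub (integrable_const 1) hSSTint]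
          simp
  rw [hPfun]
  exact hVal ▸ hP
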